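/- Let d ≥ 2. There exists a constant C > 0 depending only on d such that for all L, W > 0 and every x ∈ ℝ^d with |x_1| ≤ L/2, the first coordinate of G satisfies |G(x)_1| ≤ C·L^{-(d-2)}·W^{d-1}. -/

import Mathlib

open MeasureTheory

/-- The box `V = {z ∈ ℝ^d : |z_1| ≤ L, |z_i| ≤ W for 2 ≤ i ≤ d}`. -/
def gravBox (d : ℕ) (h0 : 0 < d) (L W : ℝ) : Set (EuclideanSpace ℝ (Fin d)) :=
  {z | |z ⟨0, h0⟩| ≤ L ∧ ∀ i : Fin d, i ≠ ⟨0, h0⟩ → |z i| ≤ W}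

/-- `G(x) = -∫_V (z-x)/|z-x|^d dz`, the conditional expectation of the gravitational force at
`x` given that the box `V` contains no stars. -/
noncomputable def gravBoxForce (d : ℕ) (h0 : 0 < d) (L W : ℝ)
    (x : EuclideanSpace ℝ (Fin d)) : EuclideanSpace ℝ (Fin d) :=
  -∫ z in gravBox d h0 L W, (‖z - x‖ ^ d)⁻¹ • (z - x)

section Aux

variable {d : ℕ}

/-- coordinate is dominated by the Euclidean norm -/
lemma gravAux_abs_coord_le_norm (e0 : Fin d) (w : EuclideanSpace ℝ (Fin d)) :
    |w e0| ≤ ‖w‖ := by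
  rw [EuclideanSpace.norm_eq]
  rw [show |w e0| = Real.sqrt ((w e0)^2) by rw [Real.sqrt_sq_eq_abs]]
  apply Real.sqrt_le_sqrt
  calc (w e0)^2 = ‖w e0‖^2 := by rw [Real.norm_eq_abs, sq_abs]
  _ ≤ ∑ i, ‖w i‖^2 :=
    Finset.single_le_sum (f := fun i => ‖w i‖^2) (fun i _ => sq_nonneg _) (Finset.mem_univ e0)

/-- volume of a coordinate box in Euclidean space -/
lemma gravAux_volume_box (e0 : Fin d) {L W : ℝ} (hL : 0 ≤ L) (hW : 0 ≤ W) :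
    volume {z : EuclideanSpace ℝ (Fin d) | |z e0| ≤ L ∧ ∀ i : Fin d, i ≠ e0 → |z i| ≤ W}
      = ENNReal.ofReal (2*L) * ENNReal.ofReal (2*W) ^ (d - 1) := by
  have hS : {z : EuclideanSpace ℝ (Fin d) | |z e0| ≤ L ∧ ∀ i : Fin d, i ≠ e0 → |z i| ≤ W}
      = (MeasurableEquiv.toLp 2 (Fin d → ℝ)).symm ⁻¹'
        (Set.univ.pi fun i => Set.Icc (-(if i = e0 then L else W)) (if i = e0 then L else W)) := by
    ext z
    simp only [Set.mem_setOf_eq, Set.mem_preimage, Set.mem_pi, Set.mem_univ, true_implies,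
      Set.mem_Icc, ← abs_le, MeasurableEquiv.coe_toLp_symm]
    constructor
    · rintro ⟨h1, h2⟩ i
      by_cases h : i = e0
      · subst h; simp [h1]
      · simp [h, h2 i h]
    · intro h
      refine ⟨by simpa using h e0, fun i hi => by simpa [hi] using h i⟩
  rw [hS, (EuclideanSpace.volume_preserving_symm_measurableEquiv_toLp (ι := Fin d)).measure_preimage
    ((MeasurableSet.univ_pi (fun i => measurableSet_Icc)).nullMeasurableSet)]
  rw [volume_pi_pi]
  simp only [Real.volume_Icc]
  rw [← Finset.mul_prod_erase Finset.univ _ (Finset.mem_univ e0)]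
  have h1 : ∀ i ∈ Finset.univ.erase e0,
      ENNReal.ofReal ((if i = e0 then L else W) - -(if i = e0 then L else W))
        = ENNReal.ofReal (2*W) := by
    intro i hi
    have : i ≠ e0 := (Finset.mem_erase.mp hi).1
    simp only [this, if_false]; ring_nf
  rw [Finset.prod_congr rfl h1, Finset.prod_const, Finset.card_erase_of_mem (Finset.mem_univ e0)]
  simp
  ring_nf
  rw [ENNReal.ofReal_mul hL, ENNReal.ofReal_ofNat]; ring

end Aux

/-- Let `d ≥ 2`. There exists a constant `C > 0` depending only on `d` such
that for all `L, W > 0` and every `x ∈ ℝ^d` with `|x_1| ≤ L/2`, the first coordinate of `G`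
satisfies `|G(x)_1| ≤ C·L^{-(d-2)}·W^{d-1}`. -/
theorem gravBoxForce_first_coord_bound (d : ℕ) (hd : 2 ≤ d) :
    ∃ C : ℝ, 0 < C ∧
      ∀ (L W : ℝ), 0 < L → 0 < W →
      ∀ x : EuclideanSpace ℝ (Fin d), |x ⟨0, by omega⟩| ≤ L / 2 →
        |gravBoxForce d (by omega) L W x ⟨0, by omega⟩| ≤
          C * L ^ (-((d : ℝ) - 2)) * W ^ (d - 1) := by
  refine ⟨2 ^ (2 * d), by positivity, ?_⟩
  intro L W hL hW x hx
  have h0 : 0 < d := by omega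
  set e0 : Fin d := ⟨0, h0⟩ with he0
  set k := d - 1 with hk
  have hdk : d = k + 1 := by omega
  have hk1 : 1 ≤ k := by omega
  have hL2 : (0:ℝ) < L / 2 := by linarith
  set c : ℝ := x e0 with hc
  -- the vector field
  set g : EuclideanSpace ℝ (Fin d) → EuclideanSpace ℝ (Fin d) :=
    fun z => (‖z - x‖ ^ d)⁻¹ • (z - x) with hg
  set V : Set (EuclideanSpace ℝ (Fin d)) := gravBox d h0 L W with hV
  have hforce : |gravBoxForce d h0 L W x e0| = |(∫ z in V, g z) e0| := by
    have : gravBoxForce d h0 L W x e0 = -((∫ z in V, g z) e0) := rfl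
    rw [this, abs_neg]
  suffices hgoal : |(∫ z in V, g z) e0| ≤ 2 ^ (2 * d) * L ^ (-((d : ℝ) - 2)) * W ^ k by
    exact hforce.trans_le hgoal
  have hRHS : (0:ℝ) < 2 ^ (2*d) * L ^ (-((d : ℝ) - 2)) * W ^ (d - 1) := by positivity
  by_cases hI : IntegrableOn g V volume
  swap
  · rw [integral_undef hI]
    simpa using hRHS.le
  -- coordinate function
  set f : EuclideanSpace ℝ (Fin d) → ℝ := fun z => (‖z - x‖ ^ d)⁻¹ * ((z - x) e0) with hf
  have hgf : ∀ z, g z e0 = f z := by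
    intro z
    simp [hg, hf, PiLp.smul_apply, smul_eq_mul]
  have hcoord : (∫ z in V, g z) e0 = ∫ z in V, f z := by
    have h := (EuclideanSpace.proj e0).integral_comp_comm hI
    simp only [PiLp.proj_apply] at h
    rw [← h]
    exact integral_congr_ae (Filter.Eventually.of_forall fun z => (hgf z).symm)
  rw [hcoord]
  -- sets A and B
  set A : Set (EuclideanSpace ℝ (Fin d)) :=
    {z | |z e0 - c| ≤ L/2 ∧ ∀ i : Fin d, i ≠ e0 → |z i| ≤ W} with hA
  set B : Set (EuclideanSpace ℝ (Fin d)) := V \ A with hB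
  have hcont : ∀ i : Fin d, Continuous fun z : EuclideanSpace ℝ (Fin d) => z i :=
    fun i => (EuclideanSpace.proj i).continuous
  have hclosed : ∀ (a r : ℝ) (i : Fin d),
      IsClosed {z : EuclideanSpace ℝ (Fin d) | |z i - a| ≤ r} :=
    fun a r i => isClosed_le (((hcont i).sub continuous_const).abs) continuous_const
  have hmeas_cond : ∀ (r : ℝ), MeasurableSet
      {z : EuclideanSpace ℝ (Fin d) | ∀ i : Fin d, i ≠ e0 → |z i| ≤ r} := by
    intro r
    have : {z : EuclideanSpace ℝ (Fin d) | ∀ i : Fin d, i ≠ e0 → |z i| ≤ r}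
        = ⋂ i : Fin d, {z | i ≠ e0 → |z i| ≤ r} := by
      ext z; simp [Set.mem_iInter]
    rw [this]
    refine MeasurableSet.iInter fun i => ?_
    by_cases h : i = e0
    · simp [h]
    · have : {z : EuclideanSpace ℝ (Fin d) | i ≠ e0 → |z i| ≤ r}
          = {z : EuclideanSpace ℝ (Fin d) | |z i - 0| ≤ r} := by
        ext z; simp [h]
      rw [this]
      exact (hclosed 0 r i).measurableSet
  have hAmeas : MeasurableSet A := by
    have : A = {z : EuclideanSpace ℝ (Fin d) | |z e0 - c| ≤ L/2} ∩
        {z | ∀ i : Fin d, i ≠ e0 → |z i| ≤ W} := by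
      ext z; simp [hA, Set.mem_setOf_eq]
    rw [this]
    exact ((hclosed c (L/2) e0).measurableSet).inter (hmeas_cond W)
  have hVmeas : MeasurableSet V := by
    have : V = {z : EuclideanSpace ℝ (Fin d) | |z e0 - 0| ≤ L} ∩
        {z | ∀ i : Fin d, i ≠ e0 → |z i| ≤ W} := by
      ext z; simp [hV, gravBox, Set.mem_setOf_eq, he0]
    rw [this]
    exact ((hclosed 0 L e0).measurableSet).inter (hmeas_cond W)
  have hAV : A ⊆ V := by
    rintro z ⟨h1, h2⟩
    refine ⟨?_, h2⟩
    have habs : |z e0| ≤ |z e0 - c| + |c| := by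
      calc |z e0| = |(z e0 - c) + c| := by rw [sub_add_cancel]
      _ ≤ |z e0 - c| + |c| := abs_add_le _ _
    linarith [hx, h1, habs]
  -- volume of V
  have hVvol : volume V = ENNReal.ofReal (2*L) * ENNReal.ofReal (2*W) ^ k := by
    rw [hV]
    exact gravAux_volume_box e0 hL.le hW.le
  have hVfin : volume V < ⊤ := by
    rw [hVvol]
    exact ENNReal.mul_lt_top ENNReal.ofReal_lt_top (ENNReal.pow_lt_top ENNReal.ofReal_lt_top)
  have hVtoReal : (volume V).toReal = 2*L * (2*W)^k := by
    rw [hVvol, ENNReal.toReal_mul, ENNReal.toReal_pow, ENNReal.toReal_ofReal (by linarith),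
      ENNReal.toReal_ofReal (by linarith)]
  -- the reflection
  set N : EuclideanSpace ℝ (Fin d) ≃ₗᵢ[ℝ] EuclideanSpace ℝ (Fin d) :=
    LinearIsometryEquiv.piLpCongrRight 2
      (fun i => if i = e0 then LinearIsometryEquiv.neg ℝ else LinearIsometryEquiv.refl ℝ ℝ)
    with hN
  have hNapp : ∀ (z : EuclideanSpace ℝ (Fin d)) (i : Fin d),
      N z i = if i = e0 then -(z i) else z i := by
    intro z i
    simp only [hN, LinearIsometryEquiv.piLpCongrRight_apply, PiLp.toLp_apply,
      apply_ite (fun (e : ℝ ≃ₗᵢ[ℝ] ℝ) => e (z i))]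
    by_cases h : i = e0 <;> simp [h]
  set σ : EuclideanSpace ℝ (Fin d) → EuclideanSpace ℝ (Fin d) :=
    fun z => (x - N x) + N z with hσ
  have hσmp : MeasurePreserving σ :=
    (measurePreserving_add_left volume (x - N x)).comp N.measurePreserving
  have hσemb : MeasurableEmbedding σ := by
    have : σ = ⇑(N.toHomeomorph.trans (Homeomorph.addLeft (x - N x))) := rfl
    rw [this]
    exact (N.toHomeomorph.trans (Homeomorph.addLeft (x - N x))).measurableEmbedding
  have hσsub : ∀ z, σ z - x = N (z - x) := by
    intro z
    simp only [hσ, map_sub]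
    abel
  have hσ0 : ∀ z, σ z e0 = 2*c - z e0 := by
    intro z
    show (x - N x + N z) e0 = 2*c - z e0
    simp only [PiLp.add_apply, PiLp.sub_apply]
    rw [hNapp z e0, hNapp x e0, if_pos rfl, if_pos rfl, ← hc]
    ring
  have hσi : ∀ z (i : Fin d), i ≠ e0 → σ z i = z i := by
    intro z i hi
    show (x - N x + N z) i = z i
    simp only [PiLp.add_apply, PiLp.sub_apply]
    rw [hNapp z i, hNapp x i, if_neg hi, if_neg hi]
    ring
  have hσA : σ ⁻¹' A = A := by
    ext z
    simp only [Set.mem_preimage, hA, Set.mem_setOf_eq]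
    constructor
    · rintro ⟨h1, h2⟩
      refine ⟨?_, fun i hi => by rw [← hσi z i hi]; exact h2 i hi⟩
      rw [hσ0] at h1
      rw [show z e0 - c = -((2*c - z e0) - c) by ring, abs_neg]
      exact h1
    · rintro ⟨h1, h2⟩
      refine ⟨?_, fun i hi => by rw [hσi z i hi]; exact h2 i hi⟩
      rw [hσ0, show 2*c - z e0 - c = -(z e0 - c) by ring, abs_neg]
      exact h1
  -- antisymmetry
  have hfσ : ∀ z, f (σ z) = -f z := by
    intro z
    show (‖σ z - x‖ ^ d)⁻¹ * ((σ z - x) e0) = -((‖z - x‖ ^ d)⁻¹ * ((z - x) e0))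
    have h1 : ‖σ z - x‖ = ‖z - x‖ := by rw [hσsub z, N.norm_map]
    have h2 : (σ z - x) e0 = -((z - x) e0) := by
      rw [hσsub z, hNapp, if_pos rfl]
    rw [h1, h2]
    ring
  -- integrability of f
  have hfint : IntegrableOn f V := by
    have h := ((EuclideanSpace.proj e0 : EuclideanSpace ℝ (Fin d) →L[ℝ] ℝ)).integrable_comp hI
    simp only [PiLp.proj_apply] at h
    have : f = fun z => g z e0 := by funext z; exact (hgf z).symm
    rw [this]
    exact h
  -- integral over A vanishes
  have hA0 : ∫ z in A, f z = 0 := by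
    have h1 : ∫ z in σ ⁻¹' A, f (σ z) = ∫ y in A, f y :=
      hσmp.setIntegral_preimage_emb hσemb f A
    rw [hσA] at h1
    have h2 : ∫ z in A, f (σ z) = -∫ z in A, f z := by
      rw [show (fun z => f (σ z)) = fun z => -f z from funext hfσ, integral_neg]
    rw [h2] at h1
    linarith
  -- split the integral
  have hsplit : ∫ z in V, f z = ∫ z in B, f z := by
    have hunion : V = A ∪ B := (Set.union_diff_cancel hAV).symm
    rw [hunion, setIntegral_union Set.disjoint_sdiff_right (hVmeas.diff hAmeas)
      (hfint.mono_set hAV) (hfint.mono_set Set.diff_subset), hA0, zero_add]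
  rw [hsplit]
  -- bound on B
  have hbound : ∀ z ∈ B, ‖f z‖ ≤ ((L/2)^k)⁻¹ := by
    rintro z ⟨hzV, hzA⟩
    have hzW : ∀ i : Fin d, i ≠ e0 → |z i| ≤ W := hzV.2
    have h1 : ¬(|z e0 - c| ≤ L/2) := by
      intro hcon
      exact hzA ⟨hcon, hzW⟩
    push_neg at h1
    have h2 : L/2 ≤ |(z - x) e0| := by
      rw [PiLp.sub_apply]
      exact h1.le
    have h3 : |(z - x) e0| ≤ ‖z - x‖ := gravAux_abs_coord_le_norm e0 (z - x)
    have h4 : L/2 ≤ ‖z - x‖ := le_trans h2 h3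
    have h5 : (0:ℝ) < ‖z - x‖ := lt_of_lt_of_le hL2 h4
    have hpow : ∀ a : ℝ, 0 < a → (a ^ d)⁻¹ * a = (a ^ k)⁻¹ := by
      intro a ha
      rw [hdk, pow_succ, mul_inv]
      field_simp
    rw [hf, Real.norm_eq_abs, abs_mul, abs_inv, abs_pow, abs_norm]
    calc (‖z - x‖ ^ d)⁻¹ * |(z - x) e0| ≤ (‖z - x‖ ^ d)⁻¹ * ‖z - x‖ :=
          mul_le_mul_of_nonneg_left h3 (by positivity)
    _ = (‖z - x‖^k)⁻¹ := hpow _ h5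
    _ ≤ ((L/2)^k)⁻¹ := by gcongr
  have hBfin : volume B < ⊤ := lt_of_le_of_lt (measure_mono Set.diff_subset) hVfin
  have hBbd : |∫ z in B, f z| ≤ ((L/2)^k)⁻¹ * (volume B).toReal := by
    rw [← Real.norm_eq_abs]
    exact norm_setIntegral_le_of_norm_le_const_ae' hBfin
      (Filter.Eventually.of_forall hbound)
  have hBV : (volume B).toReal ≤ (volume V).toReal :=
    ENNReal.toReal_mono hVfin.ne (measure_mono Set.diff_subset)
  have hfinal : |∫ z in B, f z| ≤ ((L/2)^k)⁻¹ * (2*L * (2*W)^k) := by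
    calc |∫ z in B, f z| ≤ ((L/2)^k)⁻¹ * (volume B).toReal := hBbd
    _ ≤ ((L/2)^k)⁻¹ * (volume V).toReal := by gcongr <;> positivity
    _ = ((L/2)^k)⁻¹ * (2*L * (2*W)^k) := by rw [hVtoReal]
  refine le_trans hfinal ?_
  -- final arithmetic
  have hrpow : L ^ (-((d : ℝ) - 2)) = L * (L^k)⁻¹ := by
    rw [show -((d:ℝ) - 2) = 1 + (-(k:ℝ)) by push_cast [hdk]; ring,
      Real.rpow_add hL, Real.rpow_one, Real.rpow_neg hL.le, Real.rpow_natCast]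
  rw [hrpow]
  have heq : ((L/2)^k)⁻¹ * (2*L * (2*W)^k) = 2^(2*k+1) * (L * (L^k)⁻¹ * W^k) := by
    rw [div_pow, mul_pow]
    have hLk : (0:ℝ) < L^k := by positivity
    field_simp
    ring
  rw [heq]
  have h2d : (2:ℝ)^(2*k+1) ≤ 2^(2*d) := by
    apply pow_le_pow_right₀ (by norm_num)
    omega
  calc (2:ℝ)^(2*k+1) * (L * (L^k)⁻¹ * W^k) ≤ 2^(2*d) * (L * (L^k)⁻¹ * W^k) := by
        gcongr <;> positivity
  _ = 2 ^ (2*d) * (L * (L ^ k)⁻¹) * W ^ k := by ring
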